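/- Let G be a simple graph on vertices x_1, ..., x_N with independence number d, let K be a field, and let I(G) ⊆ R = K[x_1,...,x_N] be its edge ideal. For 1 ≤ k ≤ d, let F_k = Σ x_{i_1}···x_{i_k}, the sum over all independent sets of G of cardinality k. Then the radical of the ideal I(G) + ⟨F_1, ..., F_d⟩ of R equals the maximal ideal ⟨x_1, ..., x_N⟩; equivalently, the images of F_1, ..., F_d form a homogeneous system of parameters for R/I(G). -/

import Mathlib

set_option synthInstance.maxHeartbeats 1000000

open MvPolynomial

/-- The edge ideal of a simple graph. -/
noncomputable def edgeIdeal (K : Type*) [Field K] {V : Type*} (G : SimpleGraph V) :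
    Ideal (MvPolynomial V K) :=
  Ideal.span {p | ∃ u v : V, G.Adj u v ∧ p = X u * X v}

/-- `F_k`: the sum of the squarefree monomials `x_{i₁} ⋯ x_{i_k}` over all
independent sets `{x_{i₁}, …, x_{i_k}}` of `G` of cardinality `k`. -/
noncomputable def indepSum (K : Type*) [Field K] {V : Type*} [Fintype V] [DecidableEq V]
    (G : SimpleGraph V) [DecidableRel G.Adj] (k : ℕ) : MvPolynomial V K :=
  ∑ S ∈ Finset.univ.filter
      (fun S : Finset V => S.card = k ∧ ∀ u ∈ S, ∀ v ∈ S, ¬ G.Adj u v),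
    ∏ v ∈ S, X v

/-- The ideal generated by all the variables is the kernel of `constantCoeff`. -/
lemma span_range_X_eq_ker (K : Type*) [Field K] {V : Type*} :
    Ideal.span (Set.range (MvPolynomial.X : V → MvPolynomial V K)) =
      RingHom.ker (constantCoeff : MvPolynomial V K →+* K) := by
  ext p
  rw [← Set.image_univ, MvPolynomial.mem_ideal_span_X_image]
  constructor
  · intro h
    rw [RingHom.mem_ker, constantCoeff_eq]
    by_contra h0
    obtain ⟨i, -, hi⟩ := h 0 (MvPolynomial.mem_support_iff.mpr h0)
    simp at hi
  · intro h m hm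
    have hmne : m ≠ 0 := by
      rintro rfl
      exact (MvPolynomial.mem_support_iff.mp hm)
        (by rwa [RingHom.mem_ker, constantCoeff_eq] at h)
    obtain ⟨i, hi⟩ := Finsupp.ne_iff.mp hmne
    exact ⟨i, Set.mem_univ i, by simpa using hi⟩

/-- If `d` is the independence number of `G`, then the radical of
`I(G) + ⟨F₁, …, F_d⟩` is the maximal ideal `⟨x₁, …, x_N⟩`; i.e. the images of
`F₁, …, F_d` form a homogeneous system of parameters for `K[x]/I(G)`. -/
theorem radical_edgeIdeal_sup_span_indepSum (K : Type*) [Field K] {V : Type*}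
    [Fintype V] [DecidableEq V] (G : SimpleGraph V) [DecidableRel G.Adj] (d : ℕ)
    (hd : IsGreatest {k : ℕ | ∃ S : Finset V,
      (∀ u ∈ S, ∀ v ∈ S, ¬ G.Adj u v) ∧ S.card = k} d) :
    (edgeIdeal K G +
        Ideal.span (Set.range fun j : Fin d => indepSum K G ((j : ℕ) + 1))).radical =
      Ideal.span (Set.range (MvPolynomial.X : V → MvPolynomial V K)) := by
  classical
  set J := edgeIdeal K G +
      Ideal.span (Set.range fun j : Fin d => indepSum K G ((j : ℕ) + 1)) with hJdef
  have hprime : (Ideal.span (Set.range (MvPolynomial.X : V → MvPolynomial V K))).IsPrime := by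
    rw [span_range_X_eq_ker]
    exact RingHom.ker_isPrime _
  -- upper bound on cardinalities of independent sets
  have hub : ∀ S : Finset V, (∀ u ∈ S, ∀ v ∈ S, ¬ G.Adj u v) → S.card ≤ d :=
    fun S hS => hd.2 ⟨S, hS, rfl⟩
  apply le_antisymm
  · -- √J ⊆ m
    have hJm : J ≤ Ideal.span (Set.range (MvPolynomial.X : V → MvPolynomial V K)) := by
      apply sup_le
      · rw [edgeIdeal, Ideal.span_le]
        rintro p ⟨u, v, huv, rfl⟩
        exact Ideal.mul_mem_right _ _ (Ideal.subset_span ⟨u, rfl⟩)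
      · rw [Ideal.span_le]
        rintro p ⟨j, rfl⟩
        apply Ideal.sum_mem
        intro S hS
        simp only [Finset.mem_filter] at hS
        have hSne : S.Nonempty := Finset.card_pos.mp (by omega)
        obtain ⟨a, ha⟩ := hSne
        rw [← Finset.mul_prod_erase S _ ha]
        exact Ideal.mul_mem_right _ _ (Ideal.subset_span ⟨a, rfl⟩)
    calc J.radical ≤ (Ideal.span (Set.range (MvPolynomial.X : V → MvPolynomial V K))).radical :=
          Ideal.radical_mono hJm
      _ = _ := hprime.radical
  · -- m ⊆ √J.  Key step lemma:
    have key : ∀ S : Finset V, (∀ u ∈ S, ∀ v ∈ S, ¬ G.Adj u v) → S.Nonempty →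
        (∀ T : Finset V, (∀ u ∈ T, ∀ v ∈ T, ¬ G.Adj u v) → S.card < T.card →
          (∏ v ∈ T, X v : MvPolynomial V K) ∈ J.radical) →
        (∏ v ∈ S, X v : MvPolynomial V K) ∈ J.radical := by
      intro S hind hne IH
      set k := S.card with hk
      have hk1 : 1 ≤ k := Finset.card_pos.mpr hne
      have hkd : k ≤ d := hub S hind
      -- F_k ∈ J
      have hF : indepSum K G k ∈ J := by
        apply Ideal.mem_sup_right
        apply Ideal.subset_span
        have harg : (k - 1) + 1 = k := by omega
        exact ⟨⟨k - 1, by omega⟩, by simp only [Fin.val_mk, harg]⟩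
      set Φ := Finset.univ.filter
          (fun T : Finset V => T.card = k ∧ ∀ u ∈ T, ∀ v ∈ T, ¬ G.Adj u v) with hΦ
      have hSΦ : S ∈ Φ := by
        rw [hΦ, Finset.mem_filter]
        exact ⟨Finset.mem_univ S, rfl, hind⟩
      have expand : (∏ v ∈ S, X v : MvPolynomial V K) * indepSum K G k =
          (∏ v ∈ S, X v) ^ 2 + ∑ T ∈ Φ.erase S, (∏ v ∈ S, X v) * ∏ v ∈ T, X v := by
        rw [indepSum, ← hΦ, Finset.mul_sum, ← Finset.add_sum_erase _ _ hSΦ, sq]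
      have hsq : (∏ v ∈ S, X v : MvPolynomial V K) ^ 2 ∈ J.radical := by
        have h1 : (∏ v ∈ S, X v : MvPolynomial V K) * indepSum K G k ∈ J.radical :=
          Ideal.le_radical (Ideal.mul_mem_left _ _ hF)
        have h2 : (∑ T ∈ Φ.erase S, (∏ v ∈ S, X v) * ∏ v ∈ T, X v : MvPolynomial V K)
            ∈ J.radical := by
          apply Ideal.sum_mem
          intro T hT
          have hTS : T ≠ S := (Finset.mem_erase.mp hT).1
          have hTΦ := (Finset.mem_erase.mp hT).2
          simp only [hΦ, Finset.mem_filter] at hTΦ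
          obtain ⟨-, hTcard, hTind⟩ := hTΦ
          by_cases hU : ∀ u ∈ S ∪ T, ∀ v ∈ S ∪ T, ¬ G.Adj u v
          · -- S ∪ T is independent; it is strictly bigger than S
            have hsub : S ⊆ S ∪ T := Finset.subset_union_left
            have hne2 : S ≠ S ∪ T := by
              intro h
              exact hTS (Finset.eq_of_subset_of_card_le
                (h ▸ Finset.subset_union_right) (by omega))
            have hcard : S.card < (S ∪ T).card :=
              Finset.card_lt_card (Finset.ssubset_iff_subset_ne.mpr ⟨hsub, hne2⟩)
            have hmem := IH (S ∪ T) hU hcard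
            rw [← Finset.prod_union_inter]
            exact Ideal.mul_mem_right _ _ hmem
          · -- S ∪ T contains an edge
            push_neg at hU
            obtain ⟨u, hu, v, hv, huv⟩ := hU
            have huvne : u ≠ v := G.ne_of_adj huv
            have hedge : (X u * X v : MvPolynomial V K) ∈ J :=
              Ideal.mem_sup_left (Ideal.subset_span ⟨u, v, huv, rfl⟩)
            have hdvd : (X u * X v : MvPolynomial V K) ∣
                (∏ v ∈ S, X v) * ∏ v ∈ T, X v := by
              have h1 : (X u * X v : MvPolynomial V K) ∣ ∏ w ∈ S ∪ T, X w := by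
                rw [← Finset.prod_pair huvne]
                exact Finset.prod_dvd_prod_of_subset _ _ _
                  (Finset.insert_subset hu (Finset.singleton_subset_iff.mpr hv))
              have h2 : (∏ w ∈ S ∪ T, X w : MvPolynomial V K) ∣
                  (∏ v ∈ S, X v) * ∏ v ∈ T, X v :=
                Dvd.intro _ Finset.prod_union_inter
              exact h1.trans h2
            exact Ideal.mem_of_dvd _ hdvd (Ideal.le_radical hedge)
        have := J.radical.sub_mem h1 h2
        rwa [expand, add_sub_cancel_right] at this
      exact Ideal.mem_radical_of_pow_mem hsq
    -- downward induction
    have main : ∀ n : ℕ, ∀ S : Finset V, (∀ u ∈ S, ∀ v ∈ S, ¬ G.Adj u v) → S.Nonempty →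
        d < S.card + n → (∏ v ∈ S, X v : MvPolynomial V K) ∈ J.radical := by
      intro n
      induction n with
      | zero =>
        intro S hind hne hlt
        exact absurd (hub S hind) (by omega)
      | succ n ih =>
        intro S hind hne hlt
        apply key S hind hne
        intro T hTind hcard
        have hTne : T.Nonempty := Finset.card_pos.mp (by omega)
        exact ih T hTind hTne (by omega)
    rw [Ideal.span_le]
    rintro p ⟨v, rfl⟩
    have hsv : ∀ u ∈ ({v} : Finset V), ∀ w ∈ ({v} : Finset V), ¬ G.Adj u w := by
      intro u hu w hw
      simp only [Finset.mem_singleton] at hu hw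
      subst hu; subst hw
      exact G.irrefl
    have := main d {v} hsv (Finset.singleton_nonempty v)
      (by simp [Finset.card_singleton])
    simpa using this
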